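/- arXiv:2005.03259 — 2 statements merged into one kernel-verified Lean document; each statement's English description precedes it below -/
import Mathlib

section
/- Let G = (V, E) be a finite simple graph with V nonempty, and suppose (η, a) ∈ U^(1), (ζ, b) ∈ U^(−1), η + ζ = 0 and a + b = 0, and let n be the common size of the maximal cliques of G. If G contains a chordless odd cycle of length at least 5, then every chordless odd cycle of G of length at least 5 has length exactly 5, and n = 2. -/
variable {V : Type*}

/-- A stable (independent) set of a graph. -/
def IsStableSet (G : SimpleGraph V) (S : Set V) : Prop :=
  ∀ u ∈ S, ∀ v ∈ S, ¬ G.Adj u v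

/-- The vertex set of a cycle subgraph of `G`, given by an injective
parametrization `c : ZMod m → V` (`m ≥ 3`) with consecutive vertices adjacent. -/
def IsCycleSet (G : SimpleGraph V) (C : Set V) : Prop :=
  ∃ (m : ℕ) (c : ZMod m → V), 3 ≤ m ∧ Function.Injective c ∧
    (∀ i, G.Adj (c i) (c (i + 1))) ∧ C = Set.range c

/-- The vertex set of an odd cycle subgraph of `G`. -/
def IsOddCycleSet (G : SimpleGraph V) (C : Set V) : Prop :=
  ∃ (m : ℕ) (c : ZMod m → V), 3 ≤ m ∧ Odd m ∧ Function.Injective c ∧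
    (∀ i, G.Adj (c i) (c (i + 1))) ∧ C = Set.range c

/-- The vertex set of a chordless odd cycle subgraph of `G`: the only edges of `G`
between vertices of the cycle are the cycle edges. -/
def IsChordlessOddCycleSet (G : SimpleGraph V) (C : Set V) : Prop :=
  ∃ (m : ℕ) (c : ZMod m → V), 3 ≤ m ∧ Odd m ∧ Function.Injective c ∧
    (∀ i, G.Adj (c i) (c (i + 1))) ∧
    (∀ i j, G.Adj (c i) (c j) → j = i + 1 ∨ i = j + 1) ∧
    C = Set.range c

/-- A maximal clique of `G`. -/
def IsMaximalClique (G : SimpleGraph V) (K : Set V) : Prop :=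
  G.IsClique K ∧ ∀ K' : Set V, G.IsClique K' → K ⊆ K' → K = K'

/-- Membership in HSTAB(G). -/
def memHSTAB (G : SimpleGraph V) (f : V → ℝ) : Prop :=
  (∀ x, 0 ≤ f x) ∧
  (∀ K : Set V, G.IsClique K → (∑ᶠ v ∈ K, f v) ≤ 1) ∧
  (∀ C : Set V, IsOddCycleSet G C → (∑ᶠ v ∈ C, f v) ≤ ((C.ncard : ℝ) - 1) / 2)

/-- Membership in TSTAB(G). -/
def memTSTAB (G : SimpleGraph V) (f : V → ℝ) : Prop :=
  (∀ x, 0 ≤ f x ∧ f x ≤ 1) ∧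
  (∀ x y, G.Adj x y → f x + f y ≤ 1) ∧
  (∀ C : Set V, IsOddCycleSet G C → (∑ᶠ v ∈ C, f v) ≤ ((C.ncard : ℝ) - 1) / 2)

/-- Membership in QSTAB(G). -/
def memQSTAB (G : SimpleGraph V) (f : V → ℝ) : Prop :=
  (∀ x, 0 ≤ f x) ∧
  (∀ K : Set V, G.IsClique K → (∑ᶠ v ∈ K, f v) ≤ 1)

/-- The stable set polytope STAB(G). -/
def STAB (G : SimpleGraph V) : Set (V → ℝ) :=
  convexHull ℝ {f : V → ℝ | ∃ S : Set V, IsStableSet G S ∧ f = S.indicator 1}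

/-- The set `U^(n)` of the paper, as a predicate on pairs `(g, d)`. -/
def memU (G : SimpleGraph V) (n : ℤ) (g : V → ℤ) (d : ℤ) : Prop :=
  (∀ v, n ≤ g v) ∧
  (∀ K : Set V, IsMaximalClique G K → (∑ᶠ v ∈ K, g v) ≤ d - n) ∧
  (∀ C : Set V, IsChordlessOddCycleSet G C → 5 ≤ C.ncard →
    2 * (∑ᶠ v ∈ C, g v) ≤ d * ((C.ncard : ℤ) - 1) - 2 * n)

lemma sum_const_mem {V : Type*} [Fintype V] (S : Set V) (k : ℤ) :
    (∑ᶠ v ∈ S, k) = S.ncard * k := by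
  classical
  rw [← S.coe_toFinset, finsum_mem_coe_finset, Finset.sum_const, Set.ncard_eq_toFinset_card']
  simp [mul_comm]

lemma exists_maximal_clique {V : Type*} [Fintype V] (G : SimpleGraph V) (K : Set V)
    (hK : G.IsClique K) : ∃ M, IsMaximalClique G M ∧ K ⊆ M := by
  obtain ⟨M, ⟨hMc, hKM⟩, hmax⟩ := Set.Finite.exists_maximalFor (fun s : Set V => s.ncard)
    {K' | G.IsClique K' ∧ K ⊆ K'} (Set.toFinite _) ⟨K, hK, subset_rfl⟩
  refine ⟨M, ⟨hMc, fun K' hK' hMK' => ?_⟩, hKM⟩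
  have h := hmax (j := K') ⟨hK', hKM.trans hMK'⟩ (Set.ncard_le_ncard hMK' (Set.toFinite _))
  exact Set.eq_of_subset_of_ncard_le hMK' h (Set.toFinite _)

/-- under the hypotheses of Statement 6, with `n` the common
size of maximal cliques, if `G` contains a chordless odd cycle of length at
least 5, then all such cycles have length exactly 5 and `n = 2`. -/
theorem stmt7 {V : Type*} [Fintype V] [Nonempty V] (G : SimpleGraph V)
    (η ζ : V → ℤ) (a b : ℤ) (n : ℕ)
    (hη : memU G 1 η a) (hζ : memU G (-1) ζ b)
    (hsum : η + ζ = 0) (hab : a + b = 0)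
    (hn : ∀ K : Set V, IsMaximalClique G K → K.ncard = n)
    (hC : ∃ C : Set V, IsChordlessOddCycleSet G C ∧ 5 ≤ C.ncard) :
    (∀ C : Set V, IsChordlessOddCycleSet G C → 5 ≤ C.ncard → C.ncard = 5) ∧
    n = 2 := by
  classical
  have hz : ∀ v, ζ v = -η v := by
    intro v
    have := congrFun hsum v
    simp only [Pi.add_apply, Pi.zero_apply] at this
    linarith
  have hb : b = -a := by linarith
  have hη1 : ∀ v, η v = 1 := by
    intro v
    have h1 := hη.1 v
    have h2 := hζ.1 v
    rw [hz v] at h2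
    omega
  have hηeq : η = fun _ => (1 : ℤ) := funext hη1
  have hζeq : ζ = fun _ => (-1 : ℤ) := funext fun v => by rw [hz v, hη1 v]
  -- key cycle fact
  have hcycle : ∀ C : Set V, IsChordlessOddCycleSet G C → 5 ≤ C.ncard →
      C.ncard = 5 ∧ a = 3 := by
    intro C hCc hC5
    have h1 := hη.2.2 C hCc hC5
    have h2 := hζ.2.2 C hCc hC5
    rw [hηeq, sum_const_mem] at h1
    rw [hζeq, sum_const_mem] at h2
    have hM5 : (5 : ℤ) ≤ (C.ncard : ℤ) := by exact_mod_cast hC5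
    set M : ℤ := (C.ncard : ℤ) with hM
    rw [hb] at h2
    have heq : (a - 2) * (M - 1) = 4 := by nlinarith
    have ha2 : 1 ≤ a - 2 := by nlinarith
    have hM4 : M - 1 ≤ 4 := by nlinarith
    have hMeq : M = 5 := by omega
    have ha3 : a = 3 := by
      rw [hMeq] at heq; omega
    constructor
    · rw [hM] at hMeq; exact_mod_cast hMeq
    · exact ha3
  obtain ⟨C0, hC0, hC05⟩ := hC
  have ha3 : a = 3 := (hcycle C0 hC0 hC05).2
  refine ⟨fun C hCc hC5 => (hcycle C hCc hC5).1, ?_⟩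
  -- n = 2
  obtain ⟨v⟩ := (inferInstance : Nonempty V)
  obtain ⟨M, hMmax, -⟩ := exists_maximal_clique G {v} (G.isClique_singleton v)
  have hKn := hn M hMmax
  have h1 := hη.2.1 M hMmax
  have h2 := hζ.2.1 M hMmax
  rw [hηeq, sum_const_mem] at h1
  rw [hζeq, sum_const_mem] at h2
  rw [hb, ha3] at h2
  rw [ha3] at h1
  rw [hKn] at h1 h2
  omega
end

section
/- Let G be the graph on the 21 vertices {x_i, y_i, z_i : i ∈ ℤ/7ℤ} with edges {x_i, x_{i+1}}, {x_i, y_i}, {y_i, z_i}, {z_i, y_{i+1}}, {z_i, z_{i+3}} (indices modulo 7). Then STAB(G) is a proper subset of HSTAB(G); in particular, G is not h-perfect. -/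
variable {V : Type*}

/-- The 21 vertices `x_i, y_i, z_i`, `i ∈ ℤ/7ℤ`. -/
inductive Vtx : Type
  | x : ZMod 7 → Vtx
  | y : ZMod 7 → Vtx
  | z : ZMod 7 → Vtx
  deriving DecidableEq, Fintype

/-- The oriented edge relation of the example graph. -/
def paperRel : Vtx → Vtx → Prop := fun u v =>
  (∃ i, u = Vtx.x i ∧ v = Vtx.x (i + 1)) ∨
  (∃ i, u = Vtx.x i ∧ v = Vtx.y i) ∨
  (∃ i, u = Vtx.y i ∧ v = Vtx.z i) ∨
  (∃ i, u = Vtx.z i ∧ v = Vtx.y (i + 1)) ∨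
  (∃ i, u = Vtx.z i ∧ v = Vtx.z (i + 3))

instance : DecidableRel paperRel := fun u v => by
  unfold paperRel; infer_instance

/-- The example graph of the paper. -/
def paperGraph : SimpleGraph Vtx where
  Adj u v := paperRel u v ∨ paperRel v u
  symm := ⟨fun _ _ h => Or.symm h⟩
  loopless := ⟨by
    show ∀ a, ¬(paperRel a a ∨ paperRel a a)
    decide⟩

section Aux

open Finset

instance : DecidableRel paperGraph.Adj := fun u v =>
  inferInstanceAs (Decidable (paperRel u v ∨ paperRel v u))

set_option maxHeartbeats 1000000 in
lemma noTriangle : ∀ a b c : Vtx, paperGraph.Adj a b → paperGraph.Adj b c →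
    paperGraph.Adj a c → False := by decide

lemma fsum (s : Set Vtx) (f : Vtx → ℝ) :
    ∑ᶠ v ∈ s, f v = ∑ v ∈ (Set.toFinite s).toFinset, f v :=
  finsum_mem_eq_finite_toFinset_sum f (Set.toFinite s)

lemma range_ncard {m : ℕ} [NeZero m] (c : ZMod m → Vtx) (hc : Function.Injective c) :
    (Set.range c).ncard = m := by
  have h1 : Set.range c = ↑(Finset.univ.image c) := by
    ext v; simp
  rw [h1, Set.ncard_coe_finset, Finset.card_image_of_injective _ hc, Finset.card_univ,
    ZMod.card]

lemma cycle_count {m : ℕ} [NeZero m] (hm : 3 ≤ m) (c : ZMod m → Vtx) (hc : Function.Injective c)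
    (hadj : ∀ i, paperGraph.Adj (c i) (c (i + 1))) (S : Set Vtx)
    (hS : IsStableSet paperGraph S) [DecidablePred (· ∈ S)] :
    2 * (Finset.univ.filter (fun i => c i ∈ S)).card ≤ m := by
  have key : ∀ i : ZMod m,
      (if c i ∈ S then (1 : ℕ) else 0) + (if c (i + 1) ∈ S then (1 : ℕ) else 0) ≤ 1 := by
    intro i
    by_cases h1 : c i ∈ S <;> by_cases h2 : c (i + 1) ∈ S <;> simp [h1, h2]
    exact (hS _ h1 _ h2 (hadj i)).elim
  have hshift : ∑ i : ZMod m, (if c (i + 1) ∈ S then (1 : ℕ) else 0)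
      = ∑ i : ZMod m, (if c i ∈ S then (1 : ℕ) else 0) :=
    Equiv.sum_comp (Equiv.addRight (1 : ZMod m)) (fun i => if c i ∈ S then (1 : ℕ) else 0)
  have h2 : 2 * (Finset.univ.filter (fun i => c i ∈ S)).card
      = ∑ i : ZMod m, ((if c i ∈ S then (1 : ℕ) else 0) + (if c (i + 1) ∈ S then (1 : ℕ) else 0)) := by
    rw [Finset.sum_add_distrib, hshift, Finset.card_filter, two_mul]
  calc 2 * (Finset.univ.filter (fun i => c i ∈ S)).card
      = _ := h2
    _ ≤ ∑ _i : ZMod m, 1 := Finset.sum_le_sum (fun i _ => key i)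
    _ = m := by simp [ZMod.card]

lemma indicator_mem_HSTAB (S : Set Vtx) (hS : IsStableSet paperGraph S) :
    memHSTAB paperGraph (S.indicator 1) := by
  classical
  have hind : ∀ v, S.indicator (1 : Vtx → ℝ) v = if v ∈ S then (1 : ℝ) else 0 := by
    intro v; simp [Set.indicator_apply]
  refine ⟨fun x => Set.indicator_nonneg (fun _ _ => zero_le_one) x, ?_, ?_⟩
  · intro K hK
    rw [fsum, Finset.sum_congr rfl (fun v _ => hind v), Finset.sum_boole]
    have hcard : ((Set.toFinite K).toFinset.filter (· ∈ S)).card ≤ 1 := by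
      rw [Finset.card_le_one]
      intro a ha b hb
      simp only [Finset.mem_filter, Set.Finite.mem_toFinset] at ha hb
      by_contra hne
      exact hS a ha.2 b hb.2 (hK ha.1 hb.1 hne)
    exact_mod_cast hcard
  · intro C hC
    obtain ⟨m, c, hm3, hmodd, hinj, hadj, rfl⟩ := hC
    haveI : NeZero m := ⟨by omega⟩
    rw [fsum, Finset.sum_congr rfl (fun v _ => hind v), Finset.sum_boole, range_ncard c hinj]
    have hset : (Set.toFinite (Set.range c)).toFinset.filter (· ∈ S)
        = (Finset.univ.filter (fun i => c i ∈ S)).image c := by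
      ext v
      simp only [Finset.mem_filter, Set.Finite.mem_toFinset, Set.mem_range, Finset.mem_image,
        Finset.mem_univ, true_and]
      constructor
      · rintro ⟨⟨i, rfl⟩, hv⟩; exact ⟨i, hv, rfl⟩
      · rintro ⟨i, hv, rfl⟩; exact ⟨⟨i, rfl⟩, hv⟩
    rw [hset, Finset.card_image_of_injective _ hinj]
    have h2m := cycle_count hm3 c hinj hadj S hS
    have hodd : 2 * (Finset.univ.filter (fun i => c i ∈ S)).card + 1 ≤ m := by
      obtain ⟨k, hk⟩ := hmodd; omega
    have hcast : 2 * (((Finset.univ.filter (fun i => c i ∈ S)).card : ℝ)) + 1 ≤ (m : ℝ) := by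
      exact_mod_cast hodd
    linarith

lemma hstab_convex : Convex ℝ {f : Vtx → ℝ | memHSTAB paperGraph f} := by
  intro f hf g hg a b ha hb hab
  have happ : ∀ v, (a • f + b • g) v = a * f v + b * g v := fun v => rfl
  refine ⟨?_, ?_, ?_⟩
  · intro v
    rw [happ]
    have := mul_nonneg ha (hf.1 v)
    have := mul_nonneg hb (hg.1 v)
    linarith
  · intro K hK
    have h1 := hf.2.1 K hK
    have h2 := hg.2.1 K hK
    rw [fsum] at h1 h2 ⊢
    rw [Finset.sum_congr rfl (fun v _ => happ v), Finset.sum_add_distrib,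
      ← Finset.mul_sum, ← Finset.mul_sum]
    have := mul_le_mul_of_nonneg_left h1 ha
    have := mul_le_mul_of_nonneg_left h2 hb
    nlinarith
  · intro C hC

    have h1 := hf.2.2 C hC
    have h2 := hg.2.2 C hC
    rw [fsum] at h1 h2 ⊢
    rw [Finset.sum_congr rfl (fun v _ => happ v), Finset.sum_add_distrib,
      ← Finset.mul_sum, ← Finset.mul_sum]
    have t1 := mul_le_mul_of_nonneg_left h1 ha
    have t2 := mul_le_mul_of_nonneg_left h2 hb
    have hcombo : a * (((C.ncard : ℝ) - 1) / 2) + b * (((C.ncard : ℝ) - 1) / 2)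
        = ((C.ncard : ℝ) - 1) / 2 := by rw [← add_mul, hab, one_mul]
    linarith

lemma clique_card_le_two (K : Set Vtx) (hK : paperGraph.IsClique K) :
    (Set.toFinite K).toFinset.card ≤ 2 := by
  by_contra h
  have h3 : 2 < (Set.toFinite K).toFinset.card := by omega
  obtain ⟨u, v, w, hu, hv, hw, huv, huw, hvw⟩ := Finset.two_lt_card_iff.mp h3
  rw [Set.Finite.mem_toFinset] at hu hv hw
  exact noTriangle u v w (hK hu hv huv) (hK hv hw hvw) (hK hu hw huw)

lemma f0_mem_HSTAB : memHSTAB paperGraph (fun _ => (2 / 5 : ℝ)) := by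
  refine ⟨fun _ => by norm_num, ?_, ?_⟩
  · intro K hK
    rw [fsum, Finset.sum_const]
    have := clique_card_le_two K hK
    rw [nsmul_eq_mul]
    calc ((Set.toFinite K).toFinset.card : ℝ) * (2 / 5) ≤ 2 * (2 / 5) := by
          have : ((Set.toFinite K).toFinset.card : ℝ) ≤ 2 := by exact_mod_cast this
          linarith
      _ ≤ 1 := by norm_num
  · intro C hC
    obtain ⟨m, c, hm3, hmodd, hinj, hadj, rfl⟩ := hC
    haveI : NeZero m := ⟨by omega⟩
    have hm5 : 5 ≤ m := by
      rcases Nat.lt_or_ge m 5 with h | h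
      · exfalso
        have hm3' : m = 3 := by obtain ⟨k, hk⟩ := hmodd; omega
        subst hm3'
        have a01 := hadj 0
        have a12 := hadj 1
        have a20 := hadj 2
        have e1 : (0 : ZMod 3) + 1 = 1 := by decide
        have e2 : (1 : ZMod 3) + 1 = 2 := by decide
        have e3 : (2 : ZMod 3) + 1 = 0 := by decide
        rw [e1] at a01; rw [e2] at a12; rw [e3] at a20
        exact noTriangle (c 0) (c 1) (c 2) a01 a12 a20.symm
      · exact h
    rw [fsum, Finset.sum_const, range_ncard c hinj, nsmul_eq_mul]
    have hcard : (Set.toFinite (Set.range c)).toFinset.card = m := by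
      rw [← Set.ncard_eq_toFinset_card _ (Set.toFinite (Set.range c)), range_ncard c hinj]
    rw [hcard]
    have hm5' : (5 : ℝ) ≤ (m : ℝ) := by exact_mod_cast hm5
    rw [le_div_iff₀ (by norm_num : (0:ℝ) < 2)]
    linarith

lemma halfspace_convex : Convex ℝ {f : Vtx → ℝ | ∑ v : Vtx, f v ≤ 8} := by
  intro f hf g hg a b ha hb hab
  simp only [Set.mem_setOf_eq] at hf hg ⊢
  have happ : ∀ v, (a • f + b • g) v = a * f v + b * g v := fun v => rfl
  rw [Finset.sum_congr rfl (fun v _ => happ v), Finset.sum_add_distrib,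
    ← Finset.mul_sum, ← Finset.mul_sum]
  have t1 := mul_le_mul_of_nonneg_left hf ha
  have t2 := mul_le_mul_of_nonneg_left hg hb
  have hcombo : a * (8:ℝ) + b * 8 = 8 := by rw [← add_mul, hab, one_mul]
  linarith

set_option maxHeartbeats 1000000 in
lemma stable_sum_le (S : Set Vtx) [DecidablePred (· ∈ S)]
    (hS : IsStableSet paperGraph S) :
    ∑ v : Vtx, (if v ∈ S then (1:ℕ) else 0) ≤ 8 := by
  have edge : ∀ u v, paperGraph.Adj u v →
      (if u ∈ S then (1:ℕ) else 0) + (if v ∈ S then (1:ℕ) else 0) ≤ 1 := by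
    intro u v huv
    by_cases h1 : u ∈ S <;> by_cases h2 : v ∈ S <;> simp [h1, h2]
    exact (hS u h1 v h2 huv).elim
  have huniv : (Finset.univ : Finset Vtx) = {Vtx.x 0, Vtx.x 1, Vtx.x 2, Vtx.x 3, Vtx.x 4, Vtx.x 5, Vtx.x 6, Vtx.y 0, Vtx.y 1, Vtx.y 2, Vtx.y 3, Vtx.y 4, Vtx.y 5, Vtx.y 6, Vtx.z 0, Vtx.z 1, Vtx.z 2, Vtx.z 3, Vtx.z 4, Vtx.z 5, Vtx.z 6} := by decide
  rw [huniv]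
  rw [Finset.sum_insert (by decide), Finset.sum_insert (by decide), Finset.sum_insert (by decide), Finset.sum_insert (by decide), Finset.sum_insert (by decide), Finset.sum_insert (by decide), Finset.sum_insert (by decide), Finset.sum_insert (by decide), Finset.sum_insert (by decide), Finset.sum_insert (by decide), Finset.sum_insert (by decide), Finset.sum_insert (by decide), Finset.sum_insert (by decide), Finset.sum_insert (by decide), Finset.sum_insert (by decide), Finset.sum_insert (by decide), Finset.sum_insert (by decide), Finset.sum_insert (by decide), Finset.sum_insert (by decide), Finset.sum_insert (by decide), Finset.sum_singleton]
  have e0 := edge (Vtx.x 0) (Vtx.x 1) (by decide)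
  have e1 := edge (Vtx.x 0) (Vtx.y 0) (by decide)
  have e2 := edge (Vtx.y 0) (Vtx.z 0) (by decide)
  have e3 := edge (Vtx.z 0) (Vtx.y 1) (by decide)
  have e4 := edge (Vtx.z 0) (Vtx.z 3) (by decide)
  have e5 := edge (Vtx.x 1) (Vtx.x 2) (by decide)
  have e6 := edge (Vtx.x 1) (Vtx.y 1) (by decide)
  have e7 := edge (Vtx.y 1) (Vtx.z 1) (by decide)
  have e8 := edge (Vtx.z 1) (Vtx.y 2) (by decide)
  have e9 := edge (Vtx.z 1) (Vtx.z 4) (by decide)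
  have e10 := edge (Vtx.x 2) (Vtx.x 3) (by decide)
  have e11 := edge (Vtx.x 2) (Vtx.y 2) (by decide)
  have e12 := edge (Vtx.y 2) (Vtx.z 2) (by decide)
  have e13 := edge (Vtx.z 2) (Vtx.y 3) (by decide)
  have e14 := edge (Vtx.z 2) (Vtx.z 5) (by decide)
  have e15 := edge (Vtx.x 3) (Vtx.x 4) (by decide)
  have e16 := edge (Vtx.x 3) (Vtx.y 3) (by decide)
  have e17 := edge (Vtx.y 3) (Vtx.z 3) (by decide)
  have e18 := edge (Vtx.z 3) (Vtx.y 4) (by decide)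
  have e19 := edge (Vtx.z 3) (Vtx.z 6) (by decide)
  have e20 := edge (Vtx.x 4) (Vtx.x 5) (by decide)
  have e21 := edge (Vtx.x 4) (Vtx.y 4) (by decide)
  have e22 := edge (Vtx.y 4) (Vtx.z 4) (by decide)
  have e23 := edge (Vtx.z 4) (Vtx.y 5) (by decide)
  have e24 := edge (Vtx.z 4) (Vtx.z 0) (by decide)
  have e25 := edge (Vtx.x 5) (Vtx.x 6) (by decide)
  have e26 := edge (Vtx.x 5) (Vtx.y 5) (by decide)
  have e27 := edge (Vtx.y 5) (Vtx.z 5) (by decide)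
  have e28 := edge (Vtx.z 5) (Vtx.y 6) (by decide)
  have e29 := edge (Vtx.z 5) (Vtx.z 1) (by decide)
  have e30 := edge (Vtx.x 6) (Vtx.x 0) (by decide)
  have e31 := edge (Vtx.x 6) (Vtx.y 6) (by decide)
  have e32 := edge (Vtx.y 6) (Vtx.z 6) (by decide)
  have e33 := edge (Vtx.z 6) (Vtx.y 0) (by decide)
  have e34 := edge (Vtx.z 6) (Vtx.z 2) (by decide)
  have k0 : (if Vtx.x 0 ∈ S then (1:ℕ) else 0) + (if Vtx.x 1 ∈ S then (1:ℕ) else 0) + (if Vtx.y 0 ∈ S then (1:ℕ) else 0) + (if Vtx.y 1 ∈ S then (1:ℕ) else 0) + (if Vtx.z 0 ∈ S then (1:ℕ) else 0) ≤ 2 := by omega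
  have k1 : (if Vtx.x 1 ∈ S then (1:ℕ) else 0) + (if Vtx.x 2 ∈ S then (1:ℕ) else 0) + (if Vtx.y 1 ∈ S then (1:ℕ) else 0) + (if Vtx.y 2 ∈ S then (1:ℕ) else 0) + (if Vtx.z 1 ∈ S then (1:ℕ) else 0) ≤ 2 := by omega
  have k2 : (if Vtx.x 2 ∈ S then (1:ℕ) else 0) + (if Vtx.x 3 ∈ S then (1:ℕ) else 0) + (if Vtx.y 2 ∈ S then (1:ℕ) else 0) + (if Vtx.y 3 ∈ S then (1:ℕ) else 0) + (if Vtx.z 2 ∈ S then (1:ℕ) else 0) ≤ 2 := by omega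
  have k3 : (if Vtx.x 3 ∈ S then (1:ℕ) else 0) + (if Vtx.x 4 ∈ S then (1:ℕ) else 0) + (if Vtx.y 3 ∈ S then (1:ℕ) else 0) + (if Vtx.y 4 ∈ S then (1:ℕ) else 0) + (if Vtx.z 3 ∈ S then (1:ℕ) else 0) ≤ 2 := by omega
  have k4 : (if Vtx.x 4 ∈ S then (1:ℕ) else 0) + (if Vtx.x 5 ∈ S then (1:ℕ) else 0) + (if Vtx.y 4 ∈ S then (1:ℕ) else 0) + (if Vtx.y 5 ∈ S then (1:ℕ) else 0) + (if Vtx.z 4 ∈ S then (1:ℕ) else 0) ≤ 2 := by omega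
  have k5 : (if Vtx.x 5 ∈ S then (1:ℕ) else 0) + (if Vtx.x 6 ∈ S then (1:ℕ) else 0) + (if Vtx.y 5 ∈ S then (1:ℕ) else 0) + (if Vtx.y 6 ∈ S then (1:ℕ) else 0) + (if Vtx.z 5 ∈ S then (1:ℕ) else 0) ≤ 2 := by omega
  have k6 : (if Vtx.x 6 ∈ S then (1:ℕ) else 0) + (if Vtx.x 0 ∈ S then (1:ℕ) else 0) + (if Vtx.y 6 ∈ S then (1:ℕ) else 0) + (if Vtx.y 0 ∈ S then (1:ℕ) else 0) + (if Vtx.z 6 ∈ S then (1:ℕ) else 0) ≤ 2 := by omega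
  have kz : (if Vtx.z 0 ∈ S then (1:ℕ) else 0) + (if Vtx.z 1 ∈ S then (1:ℕ) else 0) + (if Vtx.z 2 ∈ S then (1:ℕ) else 0) + (if Vtx.z 3 ∈ S then (1:ℕ) else 0) + (if Vtx.z 4 ∈ S then (1:ℕ) else 0) + (if Vtx.z 5 ∈ S then (1:ℕ) else 0) + (if Vtx.z 6 ∈ S then (1:ℕ) else 0) ≤ 3 := by omega
  linarith

end Aux

set_option maxHeartbeats 2000000 in
/-- for the example graph, STAB(G) is a proper subset of
HSTAB(G); in particular the graph is not h-perfect. -/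
theorem stmt18 : STAB paperGraph ⊂ {f : Vtx → ℝ | memHSTAB paperGraph f} := by
  classical
  rw [Set.ssubset_def]
  constructor
  · exact convexHull_min (by rintro f ⟨S, hS, rfl⟩; exact indicator_mem_HSTAB S hS) hstab_convex
  · intro hsup
    have hf0 : (fun _ => (2 / 5 : ℝ)) ∈ STAB paperGraph := hsup f0_mem_HSTAB
    have hb : STAB paperGraph ⊆ {f : Vtx → ℝ | ∑ v : Vtx, f v ≤ 8} := by
      apply convexHull_min ?_ halfspace_convex
      rintro f ⟨S, hS, rfl⟩
      simp only [Set.mem_setOf_eq]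
      have hnat := stable_sum_le S hS
      have hcast : ∑ v : Vtx, S.indicator (1 : Vtx → ℝ) v
          = ((∑ v : Vtx, (if v ∈ S then (1:ℕ) else 0) : ℕ) : ℝ) := by
        push_cast
        refine Finset.sum_congr rfl (fun v _ => ?_)
        simp [Set.indicator_apply]
      rw [hcast]
      calc ((∑ v : Vtx, (if v ∈ S then (1:ℕ) else 0) : ℕ) : ℝ)
          ≤ ((8 : ℕ) : ℝ) := Nat.cast_le.mpr hnat
        _ = 8 := by norm_num
    have h8 := hb hf0
    simp only [Set.mem_setOf_eq, Finset.sum_const, Finset.card_univ] at h8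
    have hcard : Fintype.card Vtx = 21 := by decide
    rw [hcard, nsmul_eq_mul] at h8
    norm_num at h8
end
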